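/- Let n ≥ 1 and let (K_i) be a sequence of nonempty compact convex subsets of Sⁿ converging in the Hausdorff distance to K_∞, where K_∞ has nonempty interior in Sⁿ and K_∞ ≠ Sⁿ. Then: (a) for every point x in the interior of K_∞ there exists N such that x lies in the interior of K_i for all i ≥ N; and (b) for all sufficiently large i the frontier of K_i in Sⁿ is nonempty, and the frontiers of K_i converge to the frontier of K_∞ in the Hausdorff distance. (The final part of Theorem 2.8 of the paper.) -/

import Mathlib

open scoped RealInnerProductSpace

set_option maxHeartbeats 1000000

noncomputable section

/-- `Esp n` is `ℝ^{n+1}` with its standard inner product. -/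
abbrev Esp (n : ℕ) : Type := EuclideanSpace ℝ (Fin (n + 1))

/-- The unit sphere `Sⁿ ⊆ ℝ^{n+1}`. -/
def sphereSet (n : ℕ) : Set (Esp n) := {x | ‖x‖ = 1}

/-- A convex segment in `Sⁿ`: `{(cos t)·u + (sin t)·v : 0 ≤ t ≤ a}` for an
orthonormal pair `u, v` and some `a ∈ [0, π]`. -/
def IsConvexSegment {n : ℕ} (S : Set (Esp n)) : Prop :=
  ∃ (u v : Esp n) (a : ℝ), ‖u‖ = 1 ∧ ‖v‖ = 1 ∧ ⟪u, v⟫ = 0 ∧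
    0 ≤ a ∧ a ≤ Real.pi ∧
    S = (fun t : ℝ => Real.cos t • u + Real.sin t • v) '' Set.Icc 0 a

/-- A subset of `Sⁿ` is convex if any two of its points are contained in a
convex segment contained in the set. -/
def SphConvex {n : ℕ} (A : Set (Esp n)) : Prop :=
  ∀ x ∈ A, ∀ y ∈ A, ∃ S : Set (Esp n), IsConvexSegment S ∧ S ⊆ A ∧ x ∈ S ∧ y ∈ S

/-- Convergence of a sequence of subsets of `Sⁿ` in the Hausdorff distance. -/
def HConv {n : ℕ} (K : ℕ → Set (Esp n)) (L : Set (Esp n)) : Prop :=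
  Filter.Tendsto (fun i => Metric.hausdorffDist (K i) L) Filter.atTop (nhds 0)

/-- The interior of a subset of the sphere, in the subspace topology of `Sⁿ`. -/
def sphInterior {n : ℕ} (X : Set (Esp n)) : Set (Esp n) :=
  Subtype.val '' interior (Subtype.val ⁻¹' X : Set ↥(sphereSet n))

/-- The frontier of a subset of the sphere, in the subspace topology of `Sⁿ`. -/
def sphFrontier {n : ℕ} (X : Set (Esp n)) : Set (Esp n) :=
  Subtype.val '' frontier (Subtype.val ⁻¹' X : Set ↥(sphereSet n))

namespace SphAux

open Metric Set Real

variable {n : ℕ}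

/-- The cone over a subset of the sphere. -/
def cone (K : Set (Esp n)) : Set (Esp n) :=
  {x | x = 0 ∨ (x ≠ 0 ∧ ‖x‖⁻¹ • x ∈ K)}

lemma zero_mem_cone (K : Set (Esp n)) : (0 : Esp n) ∈ cone K := Or.inl rfl

lemma smul_mem_cone {K : Set (Esp n)} (hK : K ⊆ sphereSet n) {k : Esp n} (hk : k ∈ K)
    {t : ℝ} (ht : 0 ≤ t) : t • k ∈ cone K := by
  rcases eq_or_lt_of_le ht with h | h
  · left; simp [← h]
  · right
    have hk1 : ‖k‖ = 1 := hK hk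
    have hk0 : k ≠ 0 := by intro h0; rw [h0] at hk1; simp at hk1
    have htk : t • k ≠ 0 := smul_ne_zero (ne_of_gt h) hk0
    refine ⟨htk, ?_⟩
    have : ‖t • k‖ = t := by rw [norm_smul, hk1, Real.norm_eq_abs, abs_of_pos h, mul_one]
    rw [this, inv_smul_smul₀ (ne_of_gt h)]
    exact hk

lemma subset_cone {K : Set (Esp n)} (hK : K ⊆ sphereSet n) : K ⊆ cone K := by
  intro k hk
  simpa using smul_mem_cone hK hk (zero_le_one)

lemma mem_of_mem_cone {K : Set (Esp n)} {x : Esp n} (hx : x ∈ cone K) (hx1 : ‖x‖ = 1) :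
    x ∈ K := by
  rcases hx with h | ⟨_, h⟩
  · rw [h] at hx1; simp at hx1
  · rwa [hx1, inv_one, one_smul] at h

lemma smul_mem_cone_of_mem {K : Set (Esp n)} {x : Esp n} (hx : x ∈ cone K) {t : ℝ}
    (ht : 0 ≤ t) : t • x ∈ cone K := by
  rcases hx with h | ⟨hx0, hxK⟩
  · left; simp [h]
  · rcases eq_or_lt_of_le ht with h | h
    · left; simp [← h]
    · right
      have htx : t • x ≠ 0 := smul_ne_zero (ne_of_gt h) hx0
      refine ⟨htx, ?_⟩
      have : ‖t • x‖⁻¹ • t • x = ‖x‖⁻¹ • x := by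
        rw [norm_smul, Real.norm_eq_abs, abs_of_pos h, mul_inv, smul_smul]
        rw [mul_comm t⁻¹, mul_assoc, inv_mul_cancel₀ (ne_of_gt h), mul_one]
      rwa [this]

lemma isClosed_cone {K : Set (Esp n)} (hK : IsClosed K) : IsClosed (cone K) := by
  rw [← isOpen_compl_iff]
  have hcompl : (cone K)ᶜ = {(0 : Esp n)}ᶜ ∩ (fun x : Esp n => ‖x‖⁻¹ • x) ⁻¹' Kᶜ := by
    ext x
    simp only [cone, mem_compl_iff, mem_setOf_eq, mem_inter_iff, mem_preimage,
      mem_singleton_iff]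
    push_neg
    constructor
    · rintro ⟨h0, h1⟩; exact ⟨h0, h1 h0⟩
    · rintro ⟨h0, h1⟩; exact ⟨h0, fun _ => h1⟩
  rw [hcompl]
  have hcont : ContinuousOn (fun x : Esp n => ‖x‖⁻¹ • x) {(0 : Esp n)}ᶜ := by
    refine ContinuousOn.smul (f := fun x : Esp n => ‖x‖⁻¹) ?_ continuousOn_id
    exact (continuousOn_id.norm).inv₀ (fun x hx => norm_ne_zero_iff.2 hx)
  exact hcont.isOpen_inter_preimage (isOpen_compl_singleton) hK.isOpen_compl

/-- The 2-dimensional trigonometric lemma: a nonnegative combination of two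
points on an arc is a nonnegative multiple of a point of the arc. -/
lemma trig_combo {t₁ t₂ c₁ c₂ : ℝ} (h1 : 0 ≤ t₁) (h12 : t₁ ≤ t₂) (h2 : t₂ ≤ π)
    (hc₁ : 0 ≤ c₁) (hc₂ : 0 ≤ c₂) :
    ∃ m θ, 0 ≤ m ∧ t₁ ≤ θ ∧ θ ≤ t₂ ∧
      c₁ * Real.cos t₁ + c₂ * Real.cos t₂ = m * Real.cos θ ∧
      c₁ * Real.sin t₁ + c₂ * Real.sin t₂ = m * Real.sin θ := by
  set A := c₁ * Real.cos t₁ + c₂ * Real.cos t₂ with hA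
  set B := c₁ * Real.sin t₁ + c₂ * Real.sin t₂ with hB
  by_cases h0 : A = 0 ∧ B = 0
  · exact ⟨0, t₁, le_refl _, le_refl _, h12, by rw [h0.1]; ring, by rw [h0.2]; ring⟩
  set ψ := t₂ - t₁ with hψ
  have hψ0 : 0 ≤ ψ := by linarith
  have hψπ : ψ ≤ π := by linarith
  set A' := c₁ + c₂ * Real.cos ψ with hA'
  set B' := c₂ * Real.sin ψ with hB'
  have pyth1 : Real.sin t₁ ^ 2 + Real.cos t₁ ^ 2 = 1 := Real.sin_sq_add_cos_sq t₁
  have ht2 : t₂ = ψ + t₁ := by ring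
  have hcos2 : Real.cos t₂ = Real.cos ψ * Real.cos t₁ - Real.sin ψ * Real.sin t₁ := by
    rw [ht2, Real.cos_add]
  have hsin2 : Real.sin t₂ = Real.sin ψ * Real.cos t₁ + Real.cos ψ * Real.sin t₁ := by
    rw [ht2, Real.sin_add]
  have hAid : A = A' * Real.cos t₁ - B' * Real.sin t₁ := by
    rw [hA, hA', hB', hcos2]; ring
  have hBid : B = A' * Real.sin t₁ + B' * Real.cos t₁ := by
    rw [hB, hA', hB', hsin2]; ring
  have hm2 : A ^ 2 + B ^ 2 = A' ^ 2 + B' ^ 2 := by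
    rw [hAid, hBid]; linear_combination (A' ^ 2 + B' ^ 2) * pyth1
  set m := Real.sqrt (A ^ 2 + B ^ 2) with hm
  have hmpos : 0 < m := by
    apply Real.sqrt_pos.2
    rcases not_and_or.1 h0 with h | h
    · have h2 : 0 < A ^ 2 := by positivity
      nlinarith [sq_nonneg B]
    · have h2 : 0 < B ^ 2 := by positivity
      nlinarith [sq_nonneg A]
  have hmsq : m ^ 2 = A ^ 2 + B ^ 2 := Real.sq_sqrt (by positivity)
  have hB'0 : 0 ≤ B' := mul_nonneg hc₂ (Real.sin_nonneg_of_nonneg_of_le_pi hψ0 hψπ)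
  have hA'le : A' ^ 2 ≤ m ^ 2 := by linarith [hm2, hmsq, sq_nonneg B']
  have habs : |A'| ≤ m := by
    rw [← Real.sqrt_sq_eq_abs, ← Real.sqrt_sq hmpos.le]
    exact Real.sqrt_le_sqrt hA'le
  have hA'm1 : -1 ≤ A' / m := by
    rw [le_div_iff₀ hmpos]; have := neg_abs_le A'; linarith
  have hA'm2 : A' / m ≤ 1 := by
    rw [div_le_one hmpos]; have := le_abs_self A'; linarith
  set φ := Real.arccos (A' / m) with hφ
  have hφ0 : 0 ≤ φ := Real.arccos_nonneg _
  have hφπ : φ ≤ π := Real.arccos_le_pi _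
  have hcosφ : Real.cos φ = A' / m := Real.cos_arccos hA'm1 hA'm2
  have hsinφ : Real.sin φ = B' / m := by
    rw [hφ, Real.sin_arccos]
    have h1 : 1 - (A' / m) ^ 2 = (B' / m) ^ 2 := by
      field_simp
      nlinarith [hm2, hmsq]
    rw [h1, Real.sqrt_sq (by positivity)]
  -- the combination is m • (point at angle t₁ + φ)
  have hcosθ : A = m * Real.cos (t₁ + φ) := by
    rw [Real.cos_add, hcosφ, hsinφ, hAid]
    field_simp
  have hsinθ : B = m * Real.sin (t₁ + φ) := by
    rw [Real.sin_add, hcosφ, hsinφ, hBid]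
    field_simp
  -- show t₁ + φ ≤ t₂, i.e. φ ≤ ψ
  have hφψ : φ ≤ ψ := by
    by_contra hgt
    push_neg at hgt
    have hkey : m * Real.sin (ψ - φ) = c₁ * Real.sin ψ := by
      rw [Real.sin_sub]
      have h1 : m * Real.cos φ = A' := by rw [hcosφ]; field_simp
      have h2 : m * Real.sin φ = B' := by rw [hsinφ]; field_simp
      have : m * (Real.sin ψ * Real.cos φ - Real.cos ψ * Real.sin φ)
          = Real.sin ψ * (m * Real.cos φ) - Real.cos ψ * (m * Real.sin φ) := by ring
      rw [this, h1, h2, hA', hB']; ring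
    have hsin_nonneg : 0 ≤ Real.sin (ψ - φ) := by
      have h1 : 0 ≤ c₁ * Real.sin ψ :=
        mul_nonneg hc₁ (Real.sin_nonneg_of_nonneg_of_le_pi hψ0 hψπ)
      nlinarith
    have hsin_nonpos : Real.sin (ψ - φ) ≤ 0 :=
      Real.sin_nonpos_of_nonpos_of_neg_pi_le (by linarith) (by linarith)
    have hzero : Real.sin (ψ - φ) = 0 := le_antisymm hsin_nonpos hsin_nonneg
    -- so ψ - φ = -π, forcing φ = π, ψ = 0
    have hcase : ψ - φ = -π := by
      by_contra hne
      have hlt : -π < ψ - φ := lt_of_le_of_ne (by linarith) (Ne.symm hne)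
      have := (Real.sin_eq_zero_iff_of_lt_of_lt hlt (by linarith)).1 hzero
      linarith
    have hφπ' : φ = π := by linarith [hψ0, hφπ]
    have hψ0' : ψ = 0 := by linarith
    have hA'val : A' = c₁ + c₂ := by rw [hA', hψ0', Real.cos_zero, mul_one]
    have : Real.cos φ = -1 := by rw [hφπ']; exact Real.cos_pi
    rw [hcosφ] at this
    have : A' = -m := by field_simp at this; linarith
    have h0' : 0 ≤ A' := by rw [hA'val]; positivity
    linarith
  exact ⟨m, t₁ + φ, hmpos.le, by linarith, by linarith, hcosθ, hsinθ⟩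

/-- Key algebraic step: nonnegative combinations of two points of a convex
segment lie in the cone over the segment's ambient convex set. -/
lemma combo_mem_cone {K : Set (Esp n)} (hK : K ⊆ sphereSet n)
    {u v : Esp n} {aa s₁ s₂ c₁ c₂ : ℝ}
    (h0 : 0 ≤ s₁) (h12 : s₁ ≤ s₂) (h2aa : s₂ ≤ aa) (haπ : aa ≤ π)
    (hc₁ : 0 ≤ c₁) (hc₂ : 0 ≤ c₂)
    (hsub : (fun t : ℝ => Real.cos t • u + Real.sin t • v) '' Set.Icc 0 aa ⊆ K) :
    c₁ • (Real.cos s₁ • u + Real.sin s₁ • v) + c₂ • (Real.cos s₂ • u + Real.sin s₂ • v)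
      ∈ cone K := by
  obtain ⟨m, θ, hm, hθ1, hθ2, hcos, hsin⟩ :=
    trig_combo h0 h12 (le_trans h2aa haπ) hc₁ hc₂
  have hw : Real.cos θ • u + Real.sin θ • v ∈ K := by
    apply hsub
    exact ⟨θ, ⟨le_trans h0 hθ1, le_trans hθ2 h2aa⟩, rfl⟩
  have halg : c₁ • (Real.cos s₁ • u + Real.sin s₁ • v)
      + c₂ • (Real.cos s₂ • u + Real.sin s₂ • v)
      = m • (Real.cos θ • u + Real.sin θ • v) := by
    have e1 : c₁ * Real.cos s₁ + c₂ * Real.cos s₂ = m * Real.cos θ := hcos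
    have e2 : c₁ * Real.sin s₁ + c₂ * Real.sin s₂ = m * Real.sin θ := hsin
    rw [smul_add, smul_add, smul_add, smul_smul, smul_smul, smul_smul, smul_smul,
      smul_smul, smul_smul]
    rw [← e1, ← e2]
    module
  rw [halg]
  exact smul_mem_cone hK hw hm

/-- The cone over a spherically convex subset of the sphere is convex. -/
lemma convex_cone {K : Set (Esp n)} (hK : K ⊆ sphereSet n) (hc : SphConvex K) :
    Convex ℝ (cone K) := by
  intro x hx y hy a b ha hb hab
  rcases eq_or_ne x 0 with hx0 | hx0
  · rw [hx0, smul_zero, zero_add]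
    exact smul_mem_cone_of_mem hy hb
  rcases eq_or_ne y 0 with hy0 | hy0
  · rw [hy0, smul_zero, add_zero]
    exact smul_mem_cone_of_mem hx ha
  have hxK : ‖x‖⁻¹ • x ∈ K := by
    rcases hx with h | ⟨_, h⟩; · exact absurd h hx0
    · exact h
  have hyK : ‖y‖⁻¹ • y ∈ K := by
    rcases hy with h | ⟨_, h⟩; · exact absurd h hy0
    · exact h
  obtain ⟨S, ⟨u, v, aa, hu, hv, huv, ha0, haπ, hS⟩, hSK, hk₁, hk₂⟩ :=
    hc _ hxK _ hyK
  rw [hS] at hk₁ hk₂ hSK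
  obtain ⟨s₁, hs₁, hk₁'⟩ := hk₁
  obtain ⟨s₂, hs₂, hk₂'⟩ := hk₂
  have hxeq : x = ‖x‖ • (‖x‖⁻¹ • x) := (smul_inv_smul₀ (norm_ne_zero_iff.2 hx0) x).symm
  have hyeq : y = ‖y‖ • (‖y‖⁻¹ • y) := (smul_inv_smul₀ (norm_ne_zero_iff.2 hy0) y).symm
  have hcomb : a • x + b • y
      = (a * ‖x‖) • (‖x‖⁻¹ • x) + (b * ‖y‖) • (‖y‖⁻¹ • y) := by
    rw [mul_smul, mul_smul, ← hxeq, ← hyeq]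
  rw [hcomb, ← hk₁', ← hk₂']
  have hax : 0 ≤ a * ‖x‖ := mul_nonneg ha (norm_nonneg x)
  have hby : 0 ≤ b * ‖y‖ := mul_nonneg hb (norm_nonneg y)
  rcases le_total s₁ s₂ with h12 | h21
  · exact combo_mem_cone hK hs₁.1 h12 hs₂.2 haπ hax hby hSK
  · rw [add_comm]
    exact combo_mem_cone hK hs₂.1 h21 hs₁.2 haπ hby hax hSK

/-! ### Interior and frontier correspondence -/

lemma mem_sphInterior_of_ball_subset {K : Set (Esp n)} {p : Esp n} (hp : ‖p‖ = 1)
    {δ : ℝ} (hδ : 0 < δ) (h : ∀ y : Esp n, ‖y‖ = 1 → dist y p < δ → y ∈ K) :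
    p ∈ sphInterior K := by
  have hpS : p ∈ sphereSet n := hp
  refine ⟨⟨p, hpS⟩, ?_, rfl⟩
  have hball : Metric.ball (⟨p, hpS⟩ : ↥(sphereSet n)) δ ⊆ Subtype.val ⁻¹' K := by
    intro q hq
    rw [Metric.mem_ball, Subtype.dist_eq] at hq
    exact h q.1 q.2 hq
  exact interior_maximal hball Metric.isOpen_ball (Metric.mem_ball_self hδ)

lemma cap_subset_of_mem_sphInterior {K : Set (Esp n)} {p : Esp n}
    (hp : p ∈ sphInterior K) :
    ∃ r > 0, ∀ y : Esp n, ‖y‖ = 1 → dist y p ≤ r → y ∈ K := by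
  obtain ⟨P, hPi, hPv⟩ := hp
  obtain ⟨ε, hε, hball⟩ := Metric.isOpen_iff.1 isOpen_interior P hPi
  refine ⟨ε / 2, by linarith, fun y hy hyd => ?_⟩
  have hyS : y ∈ sphereSet n := hy
  have : (⟨y, hyS⟩ : ↥(sphereSet n)) ∈ Metric.ball P ε := by
    rw [Metric.mem_ball, Subtype.dist_eq, hPv]
    exact lt_of_le_of_lt hyd (by linarith)
  have h2 : (⟨y, hyS⟩ : ↥(sphereSet n)) ∈ Subtype.val ⁻¹' K := interior_subset (hball this)
  exact h2

lemma sphInterior_subset {K : Set (Esp n)} : sphInterior K ⊆ K := by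
  intro x ⟨P, hPi, hPv⟩
  have := interior_subset hPi
  rwa [← hPv]

lemma not_mem_sphFrontier_of_mem_sphInterior {K : Set (Esp n)} {p : Esp n}
    (hp : p ∈ sphInterior K) (hf : p ∈ sphFrontier K) : False := by
  obtain ⟨P, hPi, hPv⟩ := hp
  obtain ⟨Q, hQf, hQv⟩ := hf
  have hPQ : P = Q := Subtype.ext (hPv.trans hQv.symm)
  rw [hPQ] at hPi
  exact hQf.2 hPi

lemma sphFrontier_subset {K : Set (Esp n)} (hK : IsClosed K) : sphFrontier K ⊆ K := by
  intro x ⟨P, hPf, hPv⟩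
  have hcl : IsClosed (Subtype.val ⁻¹' K : Set ↥(sphereSet n)) :=
    hK.preimage continuous_subtype_val
  have := hcl.closure_subset hPf.1
  rwa [← hPv]

lemma norm_one_of_mem_sphere {A : Set (Esp n)} (hA : A ⊆ sphereSet n) {x : Esp n}
    (hx : x ∈ A) : ‖x‖ = 1 := hA hx

/-! ### Cancellation: a ball inside a thickening of a closed convex set -/

lemma mem_of_ball_subset_cthickening {C : Set (Esp n)} (hC : Convex ℝ C)
    (hCc : IsClosed C) (hCne : C.Nonempty) {c : Esp n} {δ ε : ℝ} (hε : 0 ≤ ε)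
    (hsub : ∀ z : Esp n, dist z c < δ → z ∈ Metric.cthickening ε C)
    {z : Esp n} (hz : dist z c < δ - ε) : z ∈ C := by
  by_contra hzC
  obtain ⟨f, u, hfa, hfz⟩ := geometric_hahn_banach_closed_point hC hCc hzC
  set v := (InnerProductSpace.toDual ℝ (Esp n)).symm f with hv
  have hinner : ∀ y : Esp n, ⟪v, y⟫ = f y := fun y => InnerProductSpace.toDual_symm_apply
  have hvne : v ≠ 0 := by
    intro h0
    obtain ⟨a, ha⟩ := hCne
    have h1 : f a < u := hfa a ha
    have h2 : f z = 0 := by rw [← hinner z, h0, inner_zero_left]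
    have h3 : f a = 0 := by rw [← hinner a, h0, inner_zero_left]
    linarith
  have hvpos : 0 < ‖v‖ := norm_pos_iff.2 hvne
  set ρ := δ - ε - dist z c with hρ
  have hρpos : 0 < ρ := by simp only [hρ]; linarith
  set zs := z + (ε + ρ/2) • (‖v‖⁻¹ • v) with hzs
  have hnorm_dir : ‖(ε + ρ/2) • (‖v‖⁻¹ • v)‖ = ε + ρ/2 := by
    rw [norm_smul, norm_smul, Real.norm_eq_abs, Real.norm_eq_abs,
      abs_of_nonneg (by positivity : (0:ℝ) ≤ ε + ρ/2),
      abs_of_nonneg (by positivity : (0:ℝ) ≤ ‖v‖⁻¹),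
      inv_mul_cancel₀ hvpos.ne', mul_one]
  have hzs_dist : dist zs c < δ := by
    have h1 : dist zs z ≤ ε + ρ/2 := by
      rw [dist_eq_norm, hzs, add_sub_cancel_left, hnorm_dir]
    calc dist zs c ≤ dist zs z + dist z c := dist_triangle _ _ _
      _ ≤ ε + ρ/2 + dist z c := by linarith
      _ < δ := by simp only [hρ] at *; linarith
  have hmem := hsub zs hzs_dist
  rw [Metric.mem_cthickening_iff] at hmem
  have hlt : EMetric.infEdist zs C < ENNReal.ofReal (ε + ρ/4) :=
    lt_of_le_of_lt hmem ((ENNReal.ofReal_lt_ofReal_iff (by positivity)).2 (by linarith))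
  obtain ⟨y, hyC, hy_edist⟩ := EMetric.infEdist_lt_iff.1 hlt
  have hy_dist : dist zs y < ε + ρ/4 := by
    rwa [edist_lt_ofReal] at hy_edist
  have hfzs : f zs = f z + (ε + ρ/2) * ‖v‖ := by
    rw [hzs, map_add, map_smul, smul_eq_mul, ← hinner (‖v‖⁻¹ • v),
      real_inner_smul_right, real_inner_self_eq_norm_sq]
    field_simp
  have hbound : f zs - f y ≤ ‖v‖ * (ε + ρ/4) := by
    have h1 : f zs - f y = ⟪v, zs - y⟫ := by
      rw [inner_sub_right, hinner, hinner]
    calc f zs - f y = ⟪v, zs - y⟫ := h1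
      _ ≤ ‖v‖ * ‖zs - y‖ := real_inner_le_norm v (zs - y)
      _ ≤ ‖v‖ * (ε + ρ/4) := by
          apply mul_le_mul_of_nonneg_left _ hvpos.le
          rw [← dist_eq_norm]
          exact hy_dist.le
  have hfy : f y < u := hfa y hyC
  have hkey : (ε + ρ/2) * ‖v‖ - ‖v‖ * (ε + ρ/4) = (ρ/4) * ‖v‖ := by ring
  have hkey2 : 0 < (ρ/4) * ‖v‖ := by positivity
  linarith

/-! ### Existence of a unit orthogonal vector (dimension at least 2) -/

lemma exists_unit_orthogonal (hn : 1 ≤ n) (p : Esp n) :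
    ∃ w : Esp n, ‖w‖ = 1 ∧ ⟪p, w⟫ = 0 := by
  rcases eq_or_ne p 0 with hp0 | hp0
  · refine ⟨EuclideanSpace.single 0 1, ?_, ?_⟩
    · rw [EuclideanSpace.norm_single]; norm_num
    · rw [hp0, inner_zero_left]
  · haveI : Fact (Module.finrank ℝ (Esp n) = n + 1) := ⟨finrank_euclideanSpace_fin⟩
    have hfr : Module.finrank ℝ ((ℝ ∙ p)ᗮ : Submodule ℝ (Esp n)) = n :=
      Submodule.finrank_orthogonal_span_singleton hp0
    have hne_bot : ((ℝ ∙ p)ᗮ : Submodule ℝ (Esp n)) ≠ ⊥ := by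
      intro hbot
      rw [hbot, finrank_bot] at hfr
      omega
    obtain ⟨x, hxU, hx0⟩ := Submodule.exists_mem_ne_zero_of_ne_bot hne_bot
    refine ⟨‖x‖⁻¹ • x, ?_, ?_⟩
    · have hxp : 0 < ‖x‖ := norm_pos_iff.2 hx0
      rw [norm_smul, Real.norm_eq_abs, abs_of_pos (inv_pos.2 hxp),
        inv_mul_cancel₀ hxp.ne']
    · have hmem : ‖x‖⁻¹ • x ∈ (ℝ ∙ p)ᗮ := Submodule.smul_mem _ _ hxU
      exact Submodule.mem_orthogonal_singleton_iff_inner_right.1 hmem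

/-! ### The quantitative interior criterion (Lemma H) -/

lemma mem_sphInterior_of_near (hn : 1 ≤ n) {K : Set (Esp n)} (hKc : IsClosed K)
    (hKs : K ⊆ sphereSet n) (hconv : SphConvex K)
    {p : Esp n} (hp : ‖p‖ = 1) {r ε : ℝ} (hr0 : 0 < r) (hr1 : r ≤ 1)
    (hε0 : 0 ≤ ε) (hε : ε < r ^ 2 / 32)
    (hnear : ∀ y : Esp n, ‖y‖ = 1 → dist y p ≤ r → ∃ k ∈ K, dist y k ≤ ε) :
    p ∈ sphInterior K := by
  classical
  have hr2_pos : 0 < r ^ 2 := pow_pos hr0 2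
  have hr2_le : r ^ 2 ≤ r := by
    calc r ^ 2 = r * r := sq r
      _ ≤ r * 1 := mul_le_mul_of_nonneg_left hr1 hr0.le
      _ = r := mul_one r
  set α := Real.sqrt (1 - r ^ 2 / 4) with hαdef
  have hα2 : α ^ 2 = 1 - r ^ 2 / 4 := Real.sq_sqrt (by linarith)
  have hα_pos : 0 < α := Real.sqrt_pos.2 (by linarith)
  have hα_lt : α ≤ 1 - r ^ 2 / 8 := by
    have h1 : 1 - r ^ 2 / 4 ≤ (1 - r ^ 2 / 8) ^ 2 := by nlinarith [sq_nonneg (r ^ 2)]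
    have h2 : (0:ℝ) ≤ 1 - r ^ 2 / 8 := by linarith
    calc α ≤ Real.sqrt ((1 - r ^ 2 / 8) ^ 2) := Real.sqrt_le_sqrt h1
      _ = 1 - r ^ 2 / 8 := Real.sqrt_sq h2
  have hα_le1 : α ≤ 1 := by linarith
  have hα_ge : 1 - r ^ 2 / 4 ≤ α := by
    have h3 : 0 ≤ α * (1 - α) := mul_nonneg hα_pos.le (by linarith)
    have h4 : α * (1 - α) = α - α ^ 2 := by ring
    linarith
  set β := r / 2 with hβdef
  have hβ_pos : 0 < β := by rw [hβdef]; linarith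
  set δ := min ((1 - α) / 4) (r / 8) with hδdef
  have hδ_pos : 0 < δ := lt_min (by linarith) (by linarith)
  have hδ_ge : r ^ 2 / 32 ≤ δ := le_min (by linarith) (by linarith)
  have hδ_le : δ ≤ (1 - α) / 4 := min_le_left _ _
  have hδ_le2 : δ ≤ r / 8 := min_le_right _ _
  obtain ⟨w₀, hw₀n, hw₀i⟩ := exists_unit_orthogonal hn p
  set ν := (1 + α) / 2 with hνdef
  have hν_pos : 0 < ν := by rw [hνdef]; linarith
  have hν_le1 : ν ≤ 1 := by rw [hνdef]; linarith
  set c := ν • p with hcdef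
  have hCconv : Convex ℝ (cone K) := convex_cone hKs hconv
  have hCclosed : IsClosed (cone K) := isClosed_cone hKc
  have hCne : (cone K).Nonempty := ⟨0, zero_mem_cone K⟩
  have hMconv : Convex ℝ (Metric.cthickening ε (cone K)) := hCconv.cthickening ε
  have hcap_mem : ∀ y : Esp n, ‖y‖ = 1 → dist y p ≤ r →
      y ∈ Metric.cthickening ε (cone K) := by
    intro y hy hyd
    obtain ⟨k, hk, hdk⟩ := hnear y hy hyd
    exact Metric.mem_cthickening_of_dist_le y k ε (cone K) (subset_cone hKs hk) hdk
  have hyaux : ∀ w'' : Esp n, ‖w''‖ = 1 → ⟪p, w''⟫ = 0 →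
      α • p + β • w'' ∈ Metric.cthickening ε (cone K) := by
    intro w'' h1 h2
    have hsq : ‖α • p + β • w''‖ ^ 2 = 1 := by
      rw [norm_add_sq_real, real_inner_smul_left, real_inner_smul_right, h2,
        norm_smul, norm_smul, hp, h1, Real.norm_eq_abs, Real.norm_eq_abs,
        abs_of_pos hα_pos, abs_of_pos hβ_pos, hβdef]
      linear_combination hα2
    have hnorm : ‖α • p + β • w''‖ = 1 := by
      rw [← Real.sqrt_sq (norm_nonneg (α • p + β • w'')), hsq, Real.sqrt_one]
    have hdsq : ‖α • p + β • w'' - p‖ ^ 2 = 2 * (1 - α) := by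
      have hrw : α • p + β • w'' - p = (α - 1) • p + β • w'' := by module
      rw [hrw, norm_add_sq_real, real_inner_smul_left, real_inner_smul_right, h2,
        norm_smul, norm_smul, hp, h1, Real.norm_eq_abs, Real.norm_eq_abs,
        abs_of_pos hβ_pos]
      have habs : |α - 1| = 1 - α := by rw [abs_of_nonpos (by linarith)]; ring
      rw [habs, hβdef]
      linear_combination hα2
    have hdist : dist (α • p + β • w'') p ≤ r := by
      rw [dist_eq_norm, ← Real.sqrt_sq (norm_nonneg (α • p + β • w'' - p)), hdsq]
      calc Real.sqrt (2 * (1 - α)) ≤ Real.sqrt (r ^ 2) := Real.sqrt_le_sqrt (by linarith)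
        _ = r := Real.sqrt_sq hr0.le
    exact hcap_mem _ hnorm hdist
  have hpmem : p ∈ Metric.cthickening ε (cone K) :=
    hcap_mem p hp (by rw [dist_self]; exact hr0.le)
  have hball : ∀ z : Esp n, dist z c < δ → z ∈ Metric.cthickening ε (cone K) := by
    intro z hzc
    set γ := (⟪p, z⟫ : ℝ) with hγdef
    set w := z - γ • p with hwdef
    have hwi : ⟪p, w⟫ = 0 := by
      rw [hwdef, inner_sub_right, real_inner_smul_right, real_inner_self_eq_norm_sq, hp]
      ring
    have hwi' : ⟪w, p⟫ = 0 := by rw [real_inner_comm]; exact hwi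
    have hdecomp : z - c = w + (γ - ν) • p := by rw [hwdef, hcdef]; module
    have hnormsq : ‖z - c‖ ^ 2 = ‖w‖ ^ 2 + (γ - ν) ^ 2 := by
      rw [hdecomp, norm_add_sq_real, real_inner_smul_right, hwi', norm_smul, hp,
        Real.norm_eq_abs, mul_one, sq_abs]
      ring
    have hzc' : ‖z - c‖ < δ := by rwa [dist_eq_norm] at hzc
    have hzc2 : ‖z - c‖ ^ 2 ≤ δ ^ 2 :=
      pow_le_pow_left₀ (norm_nonneg _) hzc'.le 2
    have hwsq : ‖w‖ ^ 2 ≤ δ ^ 2 := by linarith [sq_nonneg (γ - ν)]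
    have hwle : ‖w‖ ≤ δ := by
      rw [← Real.sqrt_sq (norm_nonneg w), ← Real.sqrt_sq hδ_pos.le]
      exact Real.sqrt_le_sqrt hwsq
    have hγνsq : (γ - ν) ^ 2 ≤ δ ^ 2 := by linarith [sq_nonneg ‖w‖]
    have hγνabs : |γ - ν| ≤ δ := by
      rw [← Real.sqrt_sq_eq_abs, ← Real.sqrt_sq hδ_pos.le]
      exact Real.sqrt_le_sqrt hγνsq
    have hγ_lb : ν - δ ≤ γ := by
      have := abs_le.1 hγνabs
      linarith [this.1]
    have hγ_ub : γ ≤ ν + δ := by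
      have := abs_le.1 hγνabs
      linarith [this.2]
    have h1α : 0 < 1 - α := by linarith
    set μ := (γ - α) / (1 - α) with hμdef
    have hμ_lb : 1/4 ≤ μ := by
      rw [hμdef, le_div_iff₀ h1α]
      rw [hνdef] at hγ_lb
      linarith
    have hμ_ub : μ ≤ 3/4 := by
      rw [hμdef, div_le_iff₀ h1α]
      rw [hνdef] at hγ_ub
      linarith
    have hμγ : μ + (1 - μ) * α = γ := by
      rw [hμdef]
      field_simp
      ring
    have htc_pos : 0 < (1 - μ) * β := mul_pos (by linarith) hβ_pos
    set t := ‖w‖ / ((1 - μ) * β) with htdef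
    have ht0 : 0 ≤ t := div_nonneg (norm_nonneg w) htc_pos.le
    have ht1 : t ≤ 1 := by
      rw [htdef, div_le_one htc_pos]
      have h14 : (1:ℝ)/4 ≤ 1 - μ := by linarith
      have h15 : (1/4) * β ≤ (1 - μ) * β := mul_le_mul_of_nonneg_right h14 hβ_pos.le
      rw [hβdef] at h15 ⊢
      linarith
    have htw : t * ((1 - μ) * β) = ‖w‖ := div_mul_cancel₀ _ htc_pos.ne'
    set w' := if w = 0 then w₀ else ‖w‖⁻¹ • w with hw'def
    have hw'n : ‖w'‖ = 1 := by
      rw [hw'def]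
      split_ifs with h
      · exact hw₀n
      · have hwp : 0 < ‖w‖ := norm_pos_iff.2 h
        rw [norm_smul, Real.norm_eq_abs, abs_of_pos (inv_pos.2 hwp),
          inv_mul_cancel₀ hwp.ne']
    have hw'i : ⟪p, w'⟫ = 0 := by
      rw [hw'def]
      split_ifs with h
      · exact hw₀i
      · rw [real_inner_smul_right, hwi, mul_zero]
    have hwrep : w = ‖w‖ • w' := by
      rw [hw'def]
      split_ifs with h
      · rw [h, norm_zero, zero_smul]
      · rw [smul_inv_smul₀ (norm_ne_zero_iff.2 h)]
    have hy₁ := hyaux w' hw'n hw'i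
    have hy₂ := hyaux (-w') (by rw [norm_neg, hw'n]) (by rw [inner_neg_right, hw'i, neg_zero])
    have hcombo : z = μ • p + (1 - μ) •
        (((1 + t)/2) • (α • p + β • w') + (1 - (1 + t)/2) • (α • p + β • (-w'))) := by
      have hz1 : z = γ • p + w := by rw [hwdef]; module
      rw [hz1, ← hμγ, hwrep, ← htw]
      module
    have hlam0 : (0:ℝ) ≤ (1 + t)/2 := by linarith
    have hlam1 : (0:ℝ) ≤ 1 - (1 + t)/2 := by linarith
    have hinner_mem : ((1 + t)/2) • (α • p + β • w') + (1 - (1 + t)/2) • (α • p + β • (-w'))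
        ∈ Metric.cthickening ε (cone K) :=
      hMconv hy₁ hy₂ hlam0 hlam1 (by ring)
    rw [hcombo]
    exact hMconv hpmem hinner_mem (by linarith) (by linarith) (by ring)
  have hball2 : ∀ z : Esp n, dist z c < δ - ε → z ∈ cone K := fun z hz =>
    mem_of_ball_subset_cthickening hCconv hCclosed hCne hε0 hball hz
  have hδε : 0 < δ - ε := by linarith
  apply mem_sphInterior_of_ball_subset hp hδε
  intro y hy hyd
  have h1 : dist (ν • y) c < δ - ε := by
    rw [hcdef, dist_eq_norm, ← smul_sub, norm_smul, Real.norm_eq_abs, abs_of_pos hν_pos]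
    rw [dist_eq_norm] at hyd
    calc ν * ‖y - p‖ ≤ 1 * ‖y - p‖ :=
          mul_le_mul_of_nonneg_right hν_le1 (norm_nonneg _)
      _ < δ - ε := by rw [one_mul]; exact hyd
  have h2 := hball2 _ h1
  have h4 : ν⁻¹ • (ν • y) ∈ cone K := smul_mem_cone_of_mem h2 (inv_nonneg.2 hν_pos.le)
  rw [inv_smul_smul₀ hν_pos.ne'] at h4
  exact mem_of_mem_cone h4 hy

/-! ### Crossing the frontier along a spherical path -/

lemma exists_frontier_point {B : Set (Esp n)} (hB : IsClosed B) {q y p : Esp n}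
    (hq : ‖q‖ = 1) (hy : ‖y‖ = 1) (hqB : q ∈ B) (hyB : y ∉ B)
    {η : ℝ} (hη : 0 < η) (hη1 : η ≤ 1) (hqp : dist q p ≤ η/3) (hyp : dist y p ≤ η/3) :
    ∃ f ∈ sphFrontier B, dist f p ≤ η := by
  set w : ℝ → Esp n := fun t => q + t • (y - q) with hwdef
  set g : ℝ → Esp n := fun t => ‖w t‖⁻¹ • w t with hgdef
  have hyq : ‖y - q‖ ≤ 2*η/3 := by
    calc ‖y - q‖ = dist y q := (dist_eq_norm y q).symm
      _ ≤ dist y p + dist p q := dist_triangle _ _ _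
      _ = dist y p + dist q p := by rw [dist_comm p q]
      _ ≤ 2*η/3 := by linarith
  have hw_lb : ∀ t ∈ Set.Icc (0:ℝ) 1, 1 - t * ‖y - q‖ ≤ ‖w t‖ := by
    intro t ht
    have heq : q = w t - t • (y - q) := by
      show q = (q + t • (y - q)) - t • (y - q)
      rw [add_sub_cancel_right]
    have h1 : ‖q‖ ≤ ‖w t‖ + ‖t • (y - q)‖ := by
      calc ‖q‖ = ‖w t - t • (y - q)‖ := by rw [← heq]
        _ ≤ ‖w t‖ + ‖t • (y - q)‖ := norm_sub_le _ _
    rw [hq, norm_smul, Real.norm_eq_abs, abs_of_nonneg ht.1] at h1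
    linarith
  have hw_pos : ∀ t ∈ Set.Icc (0:ℝ) 1, 0 < ‖w t‖ := by
    intro t ht
    have h1 := hw_lb t ht
    have h2 : t * ‖y - q‖ ≤ 1 * (2*η/3) :=
      mul_le_mul ht.2 hyq (norm_nonneg _) zero_le_one
    have : (0:ℝ) < 1 - t * ‖y - q‖ := by linarith
    linarith
  have hw_ub : ∀ t ∈ Set.Icc (0:ℝ) 1, ‖w t‖ ≤ 1 := by
    intro t ht
    have hrw : w t = (1 - t) • q + t • y := by rw [hwdef]; module
    calc ‖w t‖ ≤ ‖(1-t) • q‖ + ‖t • y‖ := by rw [hrw]; exact norm_add_le _ _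
      _ = (1-t) * 1 + t * 1 := by
          rw [norm_smul, norm_smul, Real.norm_eq_abs, Real.norm_eq_abs, hq, hy,
            abs_of_nonneg (by linarith [ht.2] : (0:ℝ) ≤ 1 - t), abs_of_nonneg ht.1]
      _ = 1 := by ring
  have hgS : ∀ t ∈ Set.Icc (0:ℝ) 1, ‖g t‖ = 1 := by
    intro t ht
    rw [hgdef]
    simp only []
    rw [norm_smul, Real.norm_eq_abs, abs_of_pos (inv_pos.2 (hw_pos t ht)),
      inv_mul_cancel₀ (hw_pos t ht).ne']
  have hgdist : ∀ t ∈ Set.Icc (0:ℝ) 1, dist (g t) p ≤ η := by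
    intro t ht
    have h1 : ‖g t - w t‖ = 1 - ‖w t‖ := by
      have hrw : g t - w t = (‖w t‖⁻¹ - 1) • w t := by rw [hgdef]; simp only []; module
      rw [hrw, norm_smul, Real.norm_eq_abs]
      have hinv : 1 ≤ ‖w t‖⁻¹ :=
        (one_le_inv₀ (hw_pos t ht)).2 (hw_ub t ht)
      rw [abs_of_nonneg (by linarith : (0:ℝ) ≤ ‖w t‖⁻¹ - 1), sub_mul,
        inv_mul_cancel₀ (hw_pos t ht).ne', one_mul]
    have h2 : ‖w t - p‖ ≤ η/3 := by
      have hrw : w t - p = (1 - t) • (q - p) + t • (y - p) := by rw [hwdef]; module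
      calc ‖w t - p‖ ≤ ‖(1-t) • (q - p)‖ + ‖t • (y - p)‖ := by
            rw [hrw]; exact norm_add_le _ _
        _ = (1-t) * ‖q - p‖ + t * ‖y - p‖ := by
            rw [norm_smul, norm_smul, Real.norm_eq_abs, Real.norm_eq_abs,
              abs_of_nonneg (by linarith [ht.2] : (0:ℝ) ≤ 1 - t), abs_of_nonneg ht.1]
        _ ≤ (1-t) * (η/3) + t * (η/3) := by
            rw [dist_eq_norm] at hqp hyp
            have h3 : (0:ℝ) ≤ 1 - t := by linarith [ht.2]
            exact add_le_add (mul_le_mul_of_nonneg_left hqp h3)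
              (mul_le_mul_of_nonneg_left hyp ht.1)
        _ = η/3 := by ring
    have h3 : 1 - ‖w t‖ ≤ 2*η/3 := by
      have h4 := hw_lb t ht
      have h5 : t * ‖y - q‖ ≤ 1 * (2*η/3) :=
        mul_le_mul ht.2 hyq (norm_nonneg _) zero_le_one
      linarith
    calc dist (g t) p = ‖g t - p‖ := dist_eq_norm _ _
      _ ≤ ‖g t - w t‖ + ‖w t - p‖ := by
          have := norm_add_le (g t - w t) (w t - p)
          simpa [sub_add_sub_cancel] using this
      _ ≤ (1 - ‖w t‖) + η/3 := by rw [h1]; linarith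
      _ ≤ 2*η/3 + η/3 := by linarith
      _ = η := by ring
  have hg0 : g 0 = q := by
    rw [hgdef, hwdef]
    simp [hq]
  have hg1 : g 1 = y := by
    rw [hgdef, hwdef]
    simp [hy]
  have hgcont : ∀ t ∈ Set.Icc (0:ℝ) 1, ContinuousAt g t := by
    intro t ht
    have hwc : Continuous w := by
      rw [hwdef]
      exact continuous_const.add (continuous_id.smul continuous_const)
    apply ContinuousAt.smul (f := fun s => ‖w s‖⁻¹) (g := w)
    · exact ((hwc.norm.continuousAt).inv₀ (hw_pos t ht).ne')
    · exact hwc.continuousAt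
  set St := {t : ℝ | t ∈ Set.Icc (0:ℝ) 1 ∧ g t ∈ B} with hStdef
  have hSt_eq : St = Set.Icc (0:ℝ) 1 ∩ g ⁻¹' B := rfl
  have hSt_closed : IsClosed St := by
    rw [hSt_eq]
    have hgon : ContinuousOn g (Set.Icc (0:ℝ) 1) :=
      fun t ht => (hgcont t ht).continuousWithinAt
    exact hgon.preimage_isClosed_of_isClosed isClosed_Icc hB
  have hSt_ne : St.Nonempty := ⟨0, ⟨le_refl 0, zero_le_one⟩, by rw [hg0]; exact hqB⟩
  have hSt_bdd : BddAbove St := ⟨1, fun t ht => ht.1.2⟩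
  set T := sSup St with hTdef
  have hT_mem : T ∈ St := hSt_closed.csSup_mem hSt_ne hSt_bdd
  have hT_Icc : T ∈ Set.Icc (0:ℝ) 1 := hT_mem.1
  have hgT : g T ∈ B := hT_mem.2
  have hT_lt1 : T < 1 := by
    rcases lt_or_eq_of_le hT_Icc.2 with h | h
    · exact h
    · exfalso; rw [h, hg1] at hgT; exact hyB hgT
  have hgTS : g T ∈ sphereSet n := hgS T hT_Icc
  refine ⟨g T, ⟨⟨g T, hgTS⟩, ?_, rfl⟩, hgdist T hT_Icc⟩
  constructor
  · exact subset_closure hgT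
  · intro hint
    obtain ⟨ε, hε, hball⟩ :=
      Metric.isOpen_iff.1 isOpen_interior (⟨g T, hgTS⟩ : ↥(sphereSet n)) hint
    obtain ⟨δ', hδ', hδcont⟩ := Metric.continuousAt_iff.1 (hgcont T hT_Icc) ε hε
    set t' := min 1 (T + δ'/2) with ht'def
    have hTt' : T < t' := lt_min hT_lt1 (by linarith)
    have ht'1 : t' ≤ 1 := min_le_left _ _
    have ht'Icc : t' ∈ Set.Icc (0:ℝ) 1 := ⟨le_trans hT_Icc.1 hTt'.le, ht'1⟩
    have ht'close : dist t' T < δ' := by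
      rw [Real.dist_eq, abs_of_nonneg (by linarith : (0:ℝ) ≤ t' - T)]
      have : t' ≤ T + δ'/2 := min_le_right _ _
      linarith
    have hgt' : g t' ∉ B := by
      intro hmem
      have : t' ∈ St := ⟨ht'Icc, hmem⟩
      have : t' ≤ T := le_csSup hSt_bdd this
      linarith
    have hgt'S : g t' ∈ sphereSet n := hgS t' ht'Icc
    have hclose : dist (g t') (g T) < ε := hδcont ht'close
    have : (⟨g t', hgt'S⟩ : ↥(sphereSet n)) ∈ Metric.ball (⟨g T, hgTS⟩ : ↥(sphereSet n)) ε := by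
      rw [Metric.mem_ball, Subtype.dist_eq]
      exact hclose
    have := interior_subset (hball this)
    exact hgt' this

/-! ### Nonempty frontier via connectedness -/

lemma preconnected_sphereSet (hn : 1 ≤ n) : PreconnectedSpace ↥(sphereSet n) := by
  have hset : sphereSet n = Metric.sphere (0 : Esp n) 1 := by
    ext x
    simp [sphereSet, Metric.mem_sphere, dist_zero_right]
  rw [hset]
  have hrank : 1 < Module.rank ℝ (Esp n) := by
    rw [← Module.finrank_eq_rank]
    have : Module.finrank ℝ (Esp n) = n + 1 := finrank_euclideanSpace_fin
    rw [this]
    norm_cast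
    omega
  exact Subtype.preconnectedSpace (isConnected_sphere hrank 0 zero_le_one).isPreconnected

lemma sphFrontier_nonempty (hn : 1 ≤ n) {A : Set (Esp n)} (hA : A.Nonempty)
    (hAs : A ⊆ sphereSet n) {z : Esp n} (hz1 : z ∈ sphereSet n) (hzA : z ∉ A) :
    (sphFrontier A).Nonempty := by
  haveI := preconnected_sphereSet (n := n) hn
  have h1 : (Subtype.val ⁻¹' A : Set ↥(sphereSet n)).Nonempty := by
    obtain ⟨a, ha⟩ := hA
    exact ⟨⟨a, hAs ha⟩, ha⟩
  have h2 : (Subtype.val ⁻¹' A : Set ↥(sphereSet n)) ≠ Set.univ := by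
    intro hu
    have : (⟨z, hz1⟩ : ↥(sphereSet n)) ∈ Subtype.val ⁻¹' A := by
      rw [hu]; exact Set.mem_univ _
    exact hzA this
  exact (nonempty_frontier_iff.2 ⟨h1, h2⟩).image _

/-! ### Hausdorff distance to pointwise approximation -/

lemma near_of_hausdorffDist {A B : Set (Esp n)} (hA : IsCompact A) (hAne : A.Nonempty)
    (hB : IsCompact B) (hBne : B.Nonempty) {h : ℝ}
    (hd : Metric.hausdorffDist A B ≤ h) : ∀ x ∈ A, ∃ y ∈ B, dist x y ≤ h := by
  intro x hx
  have hfin : EMetric.hausdorffEdist A B ≠ ⊤ :=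
    Metric.hausdorffEdist_ne_top_of_nonempty_of_bounded hAne hBne hA.isBounded hB.isBounded
  have h1 : Metric.infDist x B ≤ h :=
    le_trans (Metric.infDist_le_hausdorffDist_of_mem hx hfin) hd
  obtain ⟨y, hy, hyd⟩ := hB.exists_infDist_eq_dist hBne x
  exact ⟨y, hy, by rw [← hyd]; exact h1⟩

/-! ### Main frontier approximation lemma -/

lemma frontier_approx (hn : 1 ≤ n) {A B : Set (Esp n)}
    (hAc : IsClosed A) (hAs : A ⊆ sphereSet n) (hAconv : SphConvex A)
    (hBc : IsClosed B) (hBs : B ⊆ sphereSet n)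
    {η h : ℝ} (hη0 : 0 < η) (hη1 : η ≤ 1) (hh0 : 0 ≤ h)
    (hh1 : h ≤ η / 3) (hh2 : h < (η/6)^2/32)
    (hAB : ∀ x ∈ A, ∃ y ∈ B, dist x y ≤ h)
    (hBA : ∀ x ∈ B, ∃ y ∈ A, dist x y ≤ h)
    {p : Esp n} (hp : p ∈ sphFrontier A) :
    ∃ f ∈ sphFrontier B, dist p f ≤ η := by
  by_contra hno
  push_neg at hno
  have hpA : p ∈ A := sphFrontier_subset hAc hp
  have hp1 : ‖p‖ = 1 := hAs hpA
  obtain ⟨q, hqB, hqd⟩ := hAB p hpA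
  have hq1 : ‖q‖ = 1 := hBs hqB
  have hcap : ∀ y : Esp n, ‖y‖ = 1 → dist y p ≤ η/6 → y ∈ B := by
    intro y hy hyd
    by_contra hyB
    have hqp : dist q p ≤ η/3 := by rw [dist_comm]; exact le_trans hqd hh1
    obtain ⟨f, hf, hfd⟩ := exists_frontier_point hBc hq1 hy hqB hyB hη0 hη1 hqp
      (le_trans hyd (by linarith))
    have := hno f hf
    rw [dist_comm] at this
    linarith
  have hnear : ∀ y : Esp n, ‖y‖ = 1 → dist y p ≤ η/6 → ∃ k ∈ A, dist y k ≤ h :=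
    fun y h1 h2 => hBA y (hcap y h1 h2)
  have hint := mem_sphInterior_of_near hn hAc hAs hAconv hp1
    (by linarith : (0:ℝ) < η/6) (by linarith : η/6 ≤ 1) hh0 hh2 hnear
  exact not_mem_sphFrontier_of_mem_sphInterior hint hp
end SphAux

open SphAux

/-- Theorem 2.8 (final part): if nonempty compact convex subsets `K i` of `Sⁿ`
converge in the Hausdorff distance to a compact convex set `L` with nonempty
interior in `Sⁿ` and `L ≠ Sⁿ`, then (a) every interior point of `L` is an
interior point of `K i` for all large `i`, and (b) for all large `i` the
frontier of `K i` in `Sⁿ` is nonempty and the frontiers converge in the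
Hausdorff distance to the frontier of `L`. -/
theorem sphConvex_frontier_convergence (n : ℕ) (hn : 1 ≤ n)
    (K : ℕ → Set (Esp n)) (L : Set (Esp n))
    (hne : ∀ i, (K i).Nonempty) (hcpt : ∀ i, IsCompact (K i))
    (hsub : ∀ i, K i ⊆ sphereSet n) (hc : ∀ i, SphConvex (K i))
    (hLsub : L ⊆ sphereSet n) (hLcpt : IsCompact L) (hLc : SphConvex L)
    (hLint : (sphInterior L).Nonempty) (hLne : L ≠ sphereSet n)
    (hlim : HConv K L) :
    (∀ x ∈ sphInterior L, ∃ N : ℕ, ∀ i ≥ N, x ∈ sphInterior (K i)) ∧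
    (∃ N : ℕ, ∀ i ≥ N, (sphFrontier (K i)).Nonempty) ∧
    Filter.Tendsto
      (fun i => Metric.hausdorffDist (sphFrontier (K i)) (sphFrontier L))
      Filter.atTop (nhds 0) := by
  have hLclosed : IsClosed L := hLcpt.isClosed
  have hLne' : L.Nonempty := by
    obtain ⟨x₀, hx₀⟩ := hLint
    exact ⟨x₀, sphInterior_subset hx₀⟩
  obtain ⟨z₀, hz₀S, hz₀L⟩ : ∃ z, z ∈ sphereSet n ∧ z ∉ L := by
    by_contra hcon
    push_neg at hcon
    exact hLne (le_antisymm hLsub (fun z hz => hcon z hz))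
  set d := Metric.infDist z₀ L with hddef
  have hd_pos : 0 < d := (hLclosed.notMem_iff_infDist_pos hLne').1 hz₀L
  have hlim' : Filter.Tendsto (fun i => Metric.hausdorffDist (K i) L)
      Filter.atTop (nhds 0) := hlim
  have hev : ∀ s : ℝ, 0 < s → ∃ N, ∀ i ≥ N, Metric.hausdorffDist (K i) L ≤ s := by
    intro s hs
    exact Filter.eventually_atTop.1 (hlim'.eventually_le_const hs)
  -- part (a)
  have parta : ∀ x ∈ sphInterior L, ∃ N, ∀ i ≥ N, x ∈ sphInterior (K i) := by
    intro x hx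
    obtain ⟨r₀, hr₀, hcap⟩ := cap_subset_of_mem_sphInterior hx
    set r := min r₀ 1 with hrdef
    have hr0 : 0 < r := lt_min hr₀ one_pos
    have hr1 : r ≤ 1 := min_le_right _ _
    obtain ⟨N, hN⟩ := hev (r^2/64) (by positivity)
    refine ⟨N, fun i hi => ?_⟩
    have hx1 : ‖x‖ = 1 := hLsub (sphInterior_subset hx)
    have hεlt : r^2/64 < r^2/32 := by
      have := pow_pos hr0 2
      linarith
    apply mem_sphInterior_of_near hn (hcpt i).isClosed (hsub i) (hc i) hx1 hr0 hr1
      (by positivity) hεlt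
    intro y hy hyd
    have hyL : y ∈ L := hcap y hy (le_trans hyd (min_le_left _ _))
    have hdist := hN i hi
    rw [Metric.hausdorffDist_comm] at hdist
    exact near_of_hausdorffDist hLcpt hLne' (hcpt i) (hne i) hdist y hyL
  -- frontier nonemptiness for close approximants
  have partb1 : ∀ i, Metric.hausdorffDist (K i) L ≤ d/2 → (sphFrontier (K i)).Nonempty := by
    intro i hdist
    have hz₀Ki : z₀ ∉ K i := by
      intro hmem
      obtain ⟨y, hyL, hyd⟩ :=
        near_of_hausdorffDist (hcpt i) (hne i) hLcpt hLne' hdist z₀ hmem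
      have h1 : Metric.infDist z₀ L ≤ d/2 :=
        le_trans (Metric.infDist_le_dist_of_mem hyL) hyd
      rw [← hddef] at h1
      linarith
    exact sphFrontier_nonempty hn (hne i) (hsub i) hz₀S hz₀Ki
  refine ⟨parta, ?_, ?_⟩
  · obtain ⟨N, hN⟩ := hev (d/2) (by linarith)
    exact ⟨N, fun i hi => partb1 i (hN i hi)⟩
  · rw [Metric.tendsto_atTop]
    intro ε hε
    set η := min (ε/2) 1 with hηdef
    have hη0 : 0 < η := lt_min (by linarith) one_pos
    have hη1 : η ≤ 1 := min_le_right _ _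
    have hηε : η ≤ ε/2 := min_le_left _ _
    set s := min (min (η/3) ((η/6)^2/64)) (d/2) with hsdef
    have hs0 : 0 < s := lt_min (lt_min (by linarith) (by positivity)) (by linarith)
    obtain ⟨N, hN⟩ := hev s hs0
    refine ⟨N, fun i hi => ?_⟩
    have hdist := hN i hi
    have hs1 : s ≤ η/3 := le_trans (min_le_left _ _) (min_le_left _ _)
    have hs2 : s < (η/6)^2/32 := by
      have h1 : s ≤ (η/6)^2/64 := le_trans (min_le_left _ _) (min_le_right _ _)
      have h2 : 0 < (η/6)^2 := by positivity
      linarith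
    have hFi_ne : (sphFrontier (K i)).Nonempty :=
      partb1 i (le_trans hdist (min_le_right _ _))
    have hF_ne : (sphFrontier L).Nonempty :=
      sphFrontier_nonempty hn hLne' hLsub hz₀S hz₀L
    have hAB : ∀ x ∈ K i, ∃ y ∈ L, dist x y ≤ s :=
      near_of_hausdorffDist (hcpt i) (hne i) hLcpt hLne' hdist
    have hBA : ∀ x ∈ L, ∃ y ∈ K i, dist x y ≤ s := by
      have hdist' := hdist
      rw [Metric.hausdorffDist_comm] at hdist'
      exact near_of_hausdorffDist hLcpt hLne' (hcpt i) (hne i) hdist'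
    have hdir1 : ∀ x ∈ sphFrontier (K i), ∃ y ∈ sphFrontier L, dist x y ≤ η :=
      fun x hx => frontier_approx hn (hcpt i).isClosed (hsub i) (hc i)
        hLclosed hLsub hη0 hη1 hs0.le hs1 hs2 hAB hBA hx
    have hdir2 : ∀ y ∈ sphFrontier L, ∃ x ∈ sphFrontier (K i), dist y x ≤ η :=
      fun y hy => frontier_approx hn hLclosed hLsub hLc
        (hcpt i).isClosed (hsub i) hη0 hη1 hs0.le hs1 hs2 hBA hAB hy
    have hle : Metric.hausdorffDist (sphFrontier (K i)) (sphFrontier L) ≤ η :=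
      Metric.hausdorffDist_le_of_mem_dist hη0.le hdir1 hdir2
    rw [Real.dist_eq, sub_zero, abs_of_nonneg Metric.hausdorffDist_nonneg]
    calc Metric.hausdorffDist (sphFrontier (K i)) (sphFrontier L) ≤ η := hle
      _ ≤ ε/2 := hηε
      _ < ε := by linarith
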